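/- For every finite bipartite graph G = (V,E) there exists a partition of V into three sets 𝒪, ℰ, 𝒰 such that: (i) every maximum-cardinality matching of G contains only edges joining two vertices of 𝒰 or joining a vertex of ℰ to a vertex of 𝒪; (ii) every maximum-cardinality matching saturates every vertex of 𝒰 and every vertex of 𝒪; (iii) the cardinality of a maximum matching equals |𝒪| + |𝒰|/2; and (iv) G has no edge joining two vertices of ℰ and no edge joining a vertex of ℰ to a vertex of 𝒰. -/

import Mathlib

open SimpleGraph

section DMAux
variable {V : Type*} {G : SimpleGraph V}

lemma matching_partner_unique {M : G.Subgraph} (hM : M.IsMatching) {v w w' : V}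
    (h1 : M.Adj v w) (h2 : M.Adj v w') : w = w' := by
  obtain ⟨x, _, hx⟩ := hM (M.edge_vert h1)
  rw [hx w h1, hx w' h2]

/-- Build a subgraph whose vertex set is exactly the support of the relation. -/
def mkSub (G : SimpleGraph V) (R : V → V → Prop) (hsymm : Symmetric R)
    (hle : ∀ x y, R x y → G.Adj x y) : G.Subgraph where
  verts := {x | ∃ y, R x y}
  Adj := R
  adj_sub := fun h => hle _ _ h
  edge_vert := fun h => ⟨_, h⟩
  symm := ⟨fun a b h => hsymm h⟩

lemma mkSub_isMatching {R : V → V → Prop} {hsymm : Symmetric R}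
    {hle : ∀ x y, R x y → G.Adj x y}
    (huniq : ∀ x y y', R x y → R x y' → y = y') :
    (mkSub G R hsymm hle).IsMatching := by
  intro v hv
  obtain ⟨y, hy⟩ := hv
  exact ⟨y, hy, fun y' hy' => huniq v y' y hy' hy⟩

lemma mkSub_adj {R : V → V → Prop} {hsymm : Symmetric R}
    {hle : ∀ x y, R x y → G.Adj x y} {x y : V} :
    (mkSub G R hsymm hle).Adj x y ↔ R x y := Iff.rfl

lemma mkSub_verts {R : V → V → Prop} {hsymm : Symmetric R}
    {hle : ∀ x y, R x y → G.Adj x y} {x : V} :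
    x ∈ (mkSub G R hsymm hle).verts ↔ ∃ y, R x y := Iff.rfl

/-- Extending a matching by one edge joining two unsaturated vertices. -/
lemma extend_card [Fintype V] {M : G.Subgraph} (hM : M.IsMatching) {u v : V}
    (hu : u ∉ M.verts) (hv : v ∉ M.verts) (huv : G.Adj u v) :
    ∃ N : G.Subgraph, N.IsMatching ∧ N.edgeSet.ncard = M.edgeSet.ncard + 1 := by
  have huv' : u ≠ v := huv.ne
  have hnu : ∀ y, ¬ M.Adj u y := fun y hy => hu (M.edge_vert hy)
  have hnv : ∀ y, ¬ M.Adj v y := fun y hy => hv (M.edge_vert hy)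
  set R : V → V → Prop := fun x y => M.Adj x y ∨ (x = u ∧ y = v) ∨ (x = v ∧ y = u) with hR
  have hsymm : Symmetric R := by
    rintro x y (h | ⟨rfl, rfl⟩ | ⟨rfl, rfl⟩)
    · exact Or.inl h.symm
    · exact Or.inr (Or.inr ⟨rfl, rfl⟩)
    · exact Or.inr (Or.inl ⟨rfl, rfl⟩)
  have hle : ∀ x y, R x y → G.Adj x y := by
    rintro x y (h | ⟨rfl, rfl⟩ | ⟨rfl, rfl⟩)
    · exact h.adj_sub
    · exact huv
    · exact huv.symm
  refine ⟨mkSub G R hsymm hle, ?_, ?_⟩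
  · apply mkSub_isMatching
    rintro x y y' (h | ⟨hx, hy⟩ | ⟨hx, hy⟩) (h' | ⟨hx', hy'⟩ | ⟨hx', hy'⟩) <;>
      first
      | exact matching_partner_unique hM h h'
      | simp_all
  · have hes : (mkSub G R hsymm hle).edgeSet = insert s(u, v) M.edgeSet := by
      ext e
      refine Sym2.ind (fun x y => ?_) e
      simp only [Subgraph.mem_edgeSet, mkSub_adj, hR, Set.mem_insert_iff, Sym2.eq_iff]
      tauto
    rw [hes, Set.ncard_insert_of_notMem (fun h => hnu v (Subgraph.mem_edgeSet.mp h))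
      (Set.toFinite _)]

/-- Swapping: if `v`–`w` is a matching edge and `u` is unsaturated and adjacent to `v`,
we can rematch `v` to `u`, freeing `w`, keeping the cardinality. -/
lemma swap_card [Fintype V] {M : G.Subgraph} (hM : M.IsMatching) {u v w : V}
    (hvw : M.Adj v w) (hu : u ∉ M.verts) (huv : G.Adj u v) :
    ∃ N : G.Subgraph, N.IsMatching ∧ N.edgeSet.ncard = M.edgeSet.ncard ∧ w ∉ N.verts := by
  have huv' : u ≠ v := huv.ne
  have hnu : ∀ y, ¬ M.Adj u y := fun y hy => hu (M.edge_vert hy)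
  have huw : u ≠ w := fun h => hnu v (h ▸ hvw.symm)
  have hvw' : v ≠ w := hvw.ne
  have hpv : ∀ y, M.Adj v y → y = w := fun y hy => matching_partner_unique hM hy hvw
  have hpw : ∀ y, M.Adj w y → y = v := fun y hy => matching_partner_unique hM hy hvw.symm
  set R : V → V → Prop := fun x y =>
    (M.Adj x y ∧ ¬((x = v ∧ y = w) ∨ (x = w ∧ y = v))) ∨ ((x = u ∧ y = v) ∨ (x = v ∧ y = u))
    with hR
  have hsymm : Symmetric R := by
    rintro x y (⟨h, h2⟩ | (⟨rfl, rfl⟩ | ⟨rfl, rfl⟩))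
    · exact Or.inl ⟨h.symm, by tauto⟩
    · exact Or.inr (Or.inr ⟨rfl, rfl⟩)
    · exact Or.inr (Or.inl ⟨rfl, rfl⟩)
  have hle : ∀ x y, R x y → G.Adj x y := by
    rintro x y (⟨h, -⟩ | (⟨rfl, rfl⟩ | ⟨rfl, rfl⟩))
    · exact h.adj_sub
    · exact huv
    · exact huv.symm
  refine ⟨mkSub G R hsymm hle, ?_, ?_, ?_⟩
  · apply mkSub_isMatching
    rintro x y y' (⟨h, h2⟩ | (⟨hx, hy⟩ | ⟨hx, hy⟩)) (⟨h', h2'⟩ | (⟨hx', hy'⟩ | ⟨hx', hy'⟩))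
    · exact matching_partner_unique hM h h'
    · exact absurd (hx' ▸ h) (hnu _)
    · exact absurd (Or.inl ⟨hx', hpv _ (hx' ▸ h)⟩) h2
    · exact absurd (hx ▸ h') (hnu _)
    · exact hy.trans hy'.symm
    · exact absurd (hx.symm.trans hx') huv'
    · exact absurd (Or.inl ⟨hx, hpv _ (hx ▸ h')⟩) h2'
    · exact absurd (hx'.symm.trans hx) huv'
    · exact hy.trans hy'.symm
  · have hes : (mkSub G R hsymm hle).edgeSet =
        insert s(u, v) (M.edgeSet \ {s(v, w)}) := by
      ext e
      refine Sym2.ind (fun x y => ?_) e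
      simp only [Subgraph.mem_edgeSet, mkSub_adj, hR, Set.mem_insert_iff, Set.mem_diff,
        Set.mem_singleton_iff, Sym2.eq_iff]
      constructor
      · rintro (⟨h, h2⟩ | (⟨rfl, rfl⟩ | ⟨rfl, rfl⟩)) <;> tauto
      · rintro (h | ⟨h, h2⟩)
        · tauto
        · exact Or.inl ⟨h, by tauto⟩
    have hmem : s(v, w) ∈ M.edgeSet := Subgraph.mem_edgeSet.mpr hvw
    have hpos : 1 ≤ M.edgeSet.ncard := (Set.ncard_pos (Set.toFinite _)).mpr ⟨_, hmem⟩
    rw [hes, Set.ncard_insert_of_notMem (by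
        simp only [Set.mem_diff, Subgraph.mem_edgeSet]
        exact fun h => hnu v h.1)
      (Set.toFinite _), Set.ncard_diff_singleton_of_mem hmem]
    omega
  · rw [mkSub_verts]
    rintro ⟨y, (⟨h, h2⟩ | (⟨rfl, rfl⟩ | ⟨rfl, rfl⟩))⟩
    · exact h2 (Or.inr ⟨rfl, hpw _ h⟩)
    · exact huw rfl
    · exact hvw' rfl

lemma matching_exists_edge_rep {M : G.Subgraph} (hM : M.IsMatching) {x : V} {e : Sym2 V}
    (he : e ∈ M.edgeSet) (hx : x ∈ e) : ∃ y, M.Adj x y ∧ e = s(x, y) := by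
  induction e with
  | _ a b =>
    rw [Subgraph.mem_edgeSet] at he
    rcases Sym2.mem_iff.mp hx with rfl | rfl
    · exact ⟨b, he, rfl⟩
    · exact ⟨a, he.symm, Sym2.eq_swap⟩

lemma matching_edge_unique {M : G.Subgraph} (hM : M.IsMatching) {x : V} {e₁ e₂ : Sym2 V}
    (h1 : e₁ ∈ M.edgeSet) (h2 : e₂ ∈ M.edgeSet) (hx1 : x ∈ e₁) (hx2 : x ∈ e₂) : e₁ = e₂ := by
  obtain ⟨y₁, ha1, rfl⟩ := matching_exists_edge_rep hM h1 hx1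
  obtain ⟨y₂, ha2, rfl⟩ := matching_exists_edge_rep hM h2 hx2
  rw [matching_partner_unique hM ha1 ha2]

lemma two_mul_ncard_edgeSet [Fintype V] {M : G.Subgraph} (hM : M.IsMatching) :
    2 * M.edgeSet.ncard = M.verts.ncard := by
  classical
  set s : Finset (Sym2 V) := M.edgeSet.toFinset with hs
  have hverts : M.verts.toFinset = s.biUnion (fun e => Finset.univ.filter (· ∈ e)) := by
    ext x
    simp only [Set.mem_toFinset, Finset.mem_biUnion, Finset.mem_filter, Finset.mem_univ,
      true_and, hs]
    constructor
    · intro hx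
      obtain ⟨y, hy, -⟩ := hM hx
      exact ⟨s(x, y), Subgraph.mem_edgeSet.mpr hy, Sym2.mem_mk_left x y⟩
    · rintro ⟨e, he, hxe⟩
      obtain ⟨y, ha, -⟩ := matching_exists_edge_rep hM he hxe
      exact M.edge_vert ha
  have hdisj : ∀ e₁ ∈ s, ∀ e₂ ∈ s, e₁ ≠ e₂ →
      Disjoint (Finset.univ.filter (· ∈ e₁)) (Finset.univ.filter (· ∈ e₂)) := by
    intro e₁ h1 e₂ h2 hne
    rw [Finset.disjoint_filter]
    intro x _ hx1 hx2
    rw [Set.mem_toFinset] at h1 h2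
    exact hne (matching_edge_unique hM h1 h2 hx1 hx2)
  have hcard2 : ∀ e ∈ s, (Finset.univ.filter (· ∈ e)).card = 2 := by
    intro e he
    rw [Set.mem_toFinset] at he
    induction e with
    | _ a b =>
      rw [Subgraph.mem_edgeSet] at he
      have hab : a ≠ b := he.adj_sub.ne
      have : Finset.univ.filter (· ∈ s(a, b)) = {a, b} := by
        ext z
        simp [Sym2.mem_iff]
      rw [this, Finset.card_insert_of_notMem (by simp [hab]), Finset.card_singleton]
  rw [Set.ncard_eq_toFinset_card', Set.ncard_eq_toFinset_card', hverts,
    Finset.card_biUnion hdisj, Finset.sum_congr rfl hcard2, Finset.sum_const, smul_eq_mul,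
    mul_comm]

lemma exists_maximum [Fintype V] (G : SimpleGraph V) :
    ∃ M : G.Subgraph, M.IsMatching ∧
      ∀ M' : G.Subgraph, M'.IsMatching → M'.edgeSet.ncard ≤ M.edgeSet.ncard := by
  classical
  set P : ℕ → Prop := fun n => ∃ M : G.Subgraph, M.IsMatching ∧ M.edgeSet.ncard = n with hP
  set B : ℕ := Nat.card (Sym2 V) with hB
  have hbound : ∀ M : G.Subgraph, M.edgeSet.ncard ≤ B := fun M => by
    rw [hB, ← Set.ncard_univ]
    exact Set.ncard_le_ncard (Set.subset_univ _) (Set.toFinite _)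
  have hbot : (⊥ : G.Subgraph).IsMatching := by
    intro v hv
    simp [Subgraph.verts_bot] at hv
  have hP0 : P 0 := by
    refine ⟨⊥, hbot, ?_⟩
    rw [Set.ncard_eq_zero (Set.toFinite _)]
    ext e
    induction e with
    | _ a b => simp [Subgraph.mem_edgeSet]
  obtain ⟨M, hM, hMn⟩ := Nat.findGreatest_spec (Nat.zero_le B) hP0
  exact ⟨M, hM, fun M' hM' => hMn ▸ Nat.le_findGreatest (hbound M') ⟨M', hM', rfl⟩⟩

noncomputable def pw (M : G.Subgraph) (v : V) : V :=
  letI : Nonempty V := ⟨v⟩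
  Classical.epsilon (fun w => M.Adj v w)

lemma pw_adj {M : G.Subgraph} {v : V} (hM : M.IsMatching) (h : v ∈ M.verts) :
    M.Adj v (pw M v) := by
  obtain ⟨w, hw, -⟩ := hM h
  letI : Nonempty V := ⟨v⟩
  exact Classical.epsilon_spec (⟨w, hw⟩ : ∃ w, M.Adj v w)

noncomputable def ch (M M₀ : G.Subgraph) (u : V) : ℕ → V
  | 0 => u
  | n+1 => if Even n then pw M (ch M M₀ u n) else pw M₀ (ch M M₀ u n)

lemma ch_succ {M M₀ : G.Subgraph} {u : V} (n : ℕ) :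
    ch M M₀ u (n+1) = if Even n then pw M (ch M M₀ u n) else pw M₀ (ch M M₀ u n) := rfl

/-- The chain is a valid alternating path up to step `n`. -/
def GoodP (M M₀ : G.Subgraph) (u : V) (n : ℕ) : Prop :=
  ∀ m, m < n →
    (Even m → M.Adj (ch M M₀ u m) (ch M M₀ u (m+1)) ∧
      ¬ M₀.Adj (ch M M₀ u m) (ch M M₀ u (m+1))) ∧
    (¬ Even m → M₀.Adj (ch M M₀ u m) (ch M M₀ u (m+1)) ∧
      ¬ M.Adj (ch M M₀ u m) (ch M M₀ u (m+1)))

section Chain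
variable {M M₀ : G.Subgraph} {u : V}

lemma chain_inj (hM : M.IsMatching) (hM₀ : M₀.IsMatching) (hu0 : u ∉ M₀.verts)
    {n : ℕ} (hg : GoodP M M₀ u n) :
    ∀ j, j ≤ n → ∀ i, i < j → ch M M₀ u i ≠ ch M M₀ u j := by
  intro j
  induction j using Nat.strong_induction_on with
  | _ j IH =>
    intro hjn i hij heq
    have IH2 : ∀ p q, p < j → q < j → p ≠ q → ch M M₀ u p = ch M M₀ u q → False := by
      intro p q hp hq hne he
      rcases Nat.lt_or_ge p q with h | h
      · exact IH q hq (by omega) p h he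
      · exact IH p hp (by omega) q (by omega) he.symm
    obtain ⟨jj, rfl⟩ := Nat.exists_eq_succ_of_ne_zero (show j ≠ 0 by omega)
    by_cases hjj : Even jj
    · -- incoming M-edge into position jj+1
      have hin : M.Adj (ch M M₀ u jj) (ch M M₀ u (jj+1)) := ((hg jj (by omega)).1 hjj).1
      rcases eq_or_ne i jj with rfl | hne
      · exact hin.adj_sub.ne heq
      by_cases hi : Even i
      · have hout : M.Adj (ch M M₀ u i) (ch M M₀ u (i+1)) := ((hg i (by omega)).1 hi).1
        have h2 : M.Adj (ch M M₀ u i) (ch M M₀ u jj) := by rw [heq]; exact hin.symm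
        have h3 : ch M M₀ u (i+1) = ch M M₀ u jj := matching_partner_unique hM hout h2
        have hne2 : i + 1 ≠ jj := by
          intro h
          rw [← h] at hjj
          simp [Nat.even_add_one, hi] at hjj
        exact IH2 (i+1) jj (by omega) (by omega) hne2 h3
      · obtain ⟨ii, rfl⟩ := Nat.exists_eq_succ_of_ne_zero (show i ≠ 0 by rintro rfl; exact hi (by simp))
        have hii : Even ii := by simpa [Nat.even_add_one] using hi
        have hin2 : M.Adj (ch M M₀ u ii) (ch M M₀ u (ii+1)) := ((hg ii (by omega)).1 hii).1
        have h3 : M.Adj (ch M M₀ u (ii+1)) (ch M M₀ u jj) := by rw [heq]; exact hin.symm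
        have h4 : ch M M₀ u ii = ch M M₀ u jj := matching_partner_unique hM hin2.symm h3
        exact IH2 ii jj (by omega) (by omega) (by omega) h4
    · -- incoming M₀-edge into position jj+1
      have hin : M₀.Adj (ch M M₀ u jj) (ch M M₀ u (jj+1)) := ((hg jj (by omega)).2 hjj).1
      rcases eq_or_ne i 0 with rfl | hi0
      · apply hu0
        have : ch M M₀ u (jj+1) ∈ M₀.verts := M₀.edge_vert hin.symm
        rwa [← heq] at this
      rcases eq_or_ne i jj with rfl | hne
      · exact hin.adj_sub.ne heq
      by_cases hi : Even i
      · obtain ⟨ii, rfl⟩ := Nat.exists_eq_succ_of_ne_zero hi0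
        have hii : ¬ Even ii := by simpa [Nat.even_add_one] using hi
        have hin2 : M₀.Adj (ch M M₀ u ii) (ch M M₀ u (ii+1)) := ((hg ii (by omega)).2 hii).1
        have h3 : M₀.Adj (ch M M₀ u (ii+1)) (ch M M₀ u jj) := by rw [heq]; exact hin.symm
        have h4 : ch M M₀ u ii = ch M M₀ u jj := matching_partner_unique hM₀ hin2.symm h3
        exact IH2 ii jj (by omega) (by omega) (by omega) h4
      · have hout : M₀.Adj (ch M M₀ u i) (ch M M₀ u (i+1)) := ((hg i (by omega)).2 hi).1
        have h2 : M₀.Adj (ch M M₀ u i) (ch M M₀ u jj) := by rw [heq]; exact hin.symm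
        have h3 : ch M M₀ u (i+1) = ch M M₀ u jj := matching_partner_unique hM₀ hout h2
        have hne2 : i + 1 ≠ jj := by
          intro h
          rw [← h] at hjj
          simp [Nat.even_add_one, hi] at hjj
        exact IH2 (i+1) jj (by omega) (by omega) hne2 h3

lemma good_succ_even (hM : M.IsMatching) (hM₀ : M₀.IsMatching) (hu0 : u ∉ M₀.verts)
    {n : ℕ} (hg : GoodP M M₀ u n) (hn : Even n) (hv : ch M M₀ u n ∈ M.verts) :
    GoodP M M₀ u (n+1) := by
  have hch : ch M M₀ u (n+1) = pw M (ch M M₀ u n) := by rw [ch_succ, if_pos hn]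
  intro m hm
  rcases Nat.lt_or_ge m n with h | h
  · exact hg m h
  have hmn : m = n := by omega
  subst hmn
  refine ⟨fun _ => ⟨by rw [hch]; exact pw_adj hM hv, ?_⟩, fun h' => absurd hn h'⟩
  intro hc
  rcases eq_or_ne m 0 with rfl | hm0
  · exact hu0 (M₀.edge_vert hc)
  · obtain ⟨nn, rfl⟩ : ∃ nn, m = nn + 2 := by
      obtain ⟨r, hr⟩ := hn
      rcases Nat.eq_zero_or_pos r with rfl | hrp
      · omega
      · exact ⟨r + r - 2, by omega⟩
    have hnn : Even nn := by
      rcases hn with ⟨r, hr⟩; exact ⟨r - 1, by omega⟩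
    have hin : M₀.Adj (ch M M₀ u (nn+1)) (ch M M₀ u (nn+2)) :=
      ((hg (nn+1) (by omega)).2 (by simp [Nat.even_add_one, hnn])).1
    have h2 : ch M M₀ u (nn+2+1) = ch M M₀ u (nn+1) := matching_partner_unique hM₀ hc hin.symm
    have hinM : M.Adj (ch M M₀ u nn) (ch M M₀ u (nn+1)) := ((hg nn (by omega)).1 hnn).1
    have h3 : M.Adj (ch M M₀ u (nn+2)) (ch M M₀ u (nn+1)) := by
      have := pw_adj hM hv
      rw [← hch] at this
      rwa [h2] at this
    have h4 : ch M M₀ u (nn+2) = ch M M₀ u nn := matching_partner_unique hM h3.symm hinM.symm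
    exact chain_inj hM hM₀ hu0 hg (nn+2) (by omega) nn (by omega) h4.symm

lemma good_succ_odd (hM : M.IsMatching) (hM₀ : M₀.IsMatching) (hu0 : u ∉ M₀.verts)
    {n : ℕ} (hg : GoodP M M₀ u n) (hn : ¬ Even n) (hv : ch M M₀ u n ∈ M₀.verts) :
    GoodP M M₀ u (n+1) := by
  have hch : ch M M₀ u (n+1) = pw M₀ (ch M M₀ u n) := by rw [ch_succ, if_neg hn]
  intro m hm
  rcases Nat.lt_or_ge m n with h | h
  · exact hg m h
  have hmn : m = n := by omega
  subst hmn
  refine ⟨fun h' => absurd h' hn, fun _ => ⟨by rw [hch]; exact pw_adj hM₀ hv, ?_⟩⟩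
  intro hc
  obtain ⟨nn, rfl⟩ := Nat.exists_eq_succ_of_ne_zero (show m ≠ 0 by rintro rfl; exact hn (by simp))
  have hnn : Even nn := by simpa [Nat.even_add_one] using hn
  have hinM : M.Adj (ch M M₀ u nn) (ch M M₀ u (nn+1)) := ((hg nn (by omega)).1 hnn).1
  have h2 : ch M M₀ u (nn+1+1) = ch M M₀ u nn := matching_partner_unique hM hc hinM.symm
  have h3 : M₀.Adj (ch M M₀ u (nn+1)) (ch M M₀ u nn) := by
    have := pw_adj hM₀ hv
    rw [← hch] at this
    rwa [h2] at this
  rcases eq_or_ne nn 0 with rfl | hnn0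
  · exact hu0 (M₀.edge_vert h3.symm)
  · obtain ⟨kk, rfl⟩ := Nat.exists_eq_succ_of_ne_zero hnn0
    have hkk : ¬ Even kk := by simpa [Nat.even_add_one] using hnn
    have hin0 : M₀.Adj (ch M M₀ u kk) (ch M M₀ u (kk+1)) := ((hg kk (by omega)).2 hkk).1
    have h4 : ch M M₀ u (kk+1+1) = ch M M₀ u kk := matching_partner_unique hM₀ h3.symm hin0.symm
    exact chain_inj hM hM₀ hu0 hg (kk+2) (by omega) kk (by omega) h4.symm

end Chain

section Flip
variable [Fintype V]

lemma path_N_edge {N : G.Subgraph} (hN : N.IsMatching) {k : ℕ} {c : ℕ → V}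
    (halt1 : ∀ m, m < 2*k → Even m → N.Adj (c m) (c (m+1)))
    (hend : c (2*k) ∉ N.verts)
    {x y : V} (hxy : N.Adj x y) {m : ℕ} (hm : m ≤ 2*k) (hxm : x = c m) :
    ∃ j, j < k ∧ ((x = c (2*j) ∧ y = c (2*j+1)) ∨ (x = c (2*j+1) ∧ y = c (2*j))) := by
  by_cases hmE : Even m
  · rcases eq_or_ne m (2*k) with rfl | hne
    · exact absurd (N.edge_vert (hxm ▸ hxy)) hend
    obtain ⟨r, hr⟩ := id hmE
    have hout : N.Adj (c m) (c (m+1)) := halt1 m (by omega) hmE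
    have hy : y = c (m+1) := matching_partner_unique hN (hxm ▸ hxy) hout
    refine ⟨r, by omega, Or.inl ⟨?_, ?_⟩⟩
    · rw [hxm]; congr 1; omega
    · rw [hy]; congr 1; omega
  · obtain ⟨mm, rfl⟩ := Nat.exists_eq_succ_of_ne_zero (show m ≠ 0 by rintro rfl; exact hmE (by simp))
    have hmm : Even mm := by simpa [Nat.even_add_one] using hmE
    obtain ⟨r, hr⟩ := id hmm
    have hin : N.Adj (c mm) (c (mm+1)) := halt1 mm (by omega) hmm
    have hy : y = c mm := matching_partner_unique hN (hxm ▸ hxy) hin.symm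
    refine ⟨r, by omega, Or.inr ⟨?_, ?_⟩⟩
    · rw [hxm]; congr 1; omega
    · rw [hy]; congr 1; omega

lemma flip_exists {N : G.Subgraph} (hN : N.IsMatching) {k : ℕ} {c : ℕ → V}
    (hinj : ∀ i, i ≤ 2*k → ∀ j, j ≤ 2*k → c i = c j → i = j)
    (halt1 : ∀ m, m < 2*k → Even m → N.Adj (c m) (c (m+1)))
    (halt2 : ∀ m, m < 2*k → ¬Even m → G.Adj (c m) (c (m+1)) ∧ ¬ N.Adj (c m) (c (m+1)))
    (hend : c (2*k) ∉ N.verts) :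
    ∃ N' : G.Subgraph, N'.IsMatching ∧ N'.edgeSet.ncard = N.edgeSet.ncard ∧
      c 0 ∉ N'.verts ∧
      (∀ x y, N.Adj x y → (∀ m, m ≤ 2*k → x ≠ c m) → N'.Adj x y) ∧
      (∀ x, x ∈ N'.verts → x ∈ N.verts ∨ ∃ m, m ≤ 2*k ∧ x = c m) := by
  set isRem : V → V → Prop := fun x y =>
    ∃ j, j < k ∧ ((x = c (2*j) ∧ y = c (2*j+1)) ∨ (x = c (2*j+1) ∧ y = c (2*j))) with hisRem
  set isAdd : V → V → Prop := fun x y =>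
    ∃ j, j < k ∧ ((x = c (2*j+1) ∧ y = c (2*j+2)) ∨ (x = c (2*j+2) ∧ y = c (2*j+1))) with hisAdd
  set R : V → V → Prop := fun x y => (N.Adj x y ∧ ¬ isRem x y) ∨ isAdd x y with hRdef
  have hkey : ∀ x y m, N.Adj x y → m ≤ 2*k → x = c m → isRem x y := by
    intro x y m hxy hm hxm
    exact path_N_edge hN halt1 hend hxy hm hxm
  have hsymm : Symmetric R := by
    rintro x y (⟨h, h2⟩ | ⟨j, hj, hc⟩)
    · refine Or.inl ⟨h.symm, ?_⟩
      rintro ⟨j, hj, hc⟩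
      exact h2 ⟨j, hj, by tauto⟩
    · exact Or.inr ⟨j, hj, by tauto⟩
  have hle : ∀ x y, R x y → G.Adj x y := by
    rintro x y (⟨h, -⟩ | ⟨j, hj, (⟨rfl, rfl⟩ | ⟨rfl, rfl⟩)⟩)
    · exact h.adj_sub
    · exact (halt2 (2*j+1) (by omega) (by simp [Nat.even_add_one, parity_simps])).1
    · exact (halt2 (2*j+1) (by omega) (by simp [Nat.even_add_one, parity_simps])).1.symm
  refine ⟨mkSub G R hsymm hle, ?_, ?_, ?_, ?_, ?_⟩
  · apply mkSub_isMatching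
    rintro x y y' hR hR'
    rcases hR with ⟨h, h2⟩ | ⟨j, hj, hc⟩
    · rcases hR' with ⟨h', h2'⟩ | ⟨j', hj', hc'⟩
      · exact matching_partner_unique hN h h'
      · rcases hc' with ⟨hx', hy'⟩ | ⟨hx', hy'⟩
        · exact absurd (hkey x y (2*j'+1) h (by omega) hx') h2
        · exact absurd (hkey x y (2*j'+2) h (by omega) hx') h2
    · rcases hR' with ⟨h', h2'⟩ | ⟨j', hj', hc'⟩
      · rcases hc with ⟨hx, hy⟩ | ⟨hx, hy⟩
        · exact absurd (hkey x y' (2*j+1) h' (by omega) hx) h2'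
        · exact absurd (hkey x y' (2*j+2) h' (by omega) hx) h2'
      · rcases hc with ⟨hx, hy⟩ | ⟨hx, hy⟩ <;> rcases hc' with ⟨hx', hy'⟩ | ⟨hx', hy'⟩
        · have := hinj _ (by omega) _ (by omega) (hx.symm.trans hx')
          have hjj : j = j' := by omega
          rw [hy, hy', hjj]
        · have := hinj (2*j+1) (by omega) (2*j'+2) (by omega) (hx.symm.trans hx')
          omega
        · have := hinj (2*j+2) (by omega) (2*j'+1) (by omega) (hx.symm.trans hx')
          omega
        · have := hinj (2*j+2) (by omega) (2*j'+2) (by omega) (hx.symm.trans hx')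
          have hjj : j = j' := by omega
          rw [hy, hy', hjj]
  · -- cardinality
    set RemS : Set (Sym2 V) := (fun j => s(c (2*j), c (2*j+1))) '' (Set.Iio k) with hRemS
    set AddS : Set (Sym2 V) := (fun j => s(c (2*j+1), c (2*j+2))) '' (Set.Iio k) with hAddS
    have hRemIff : ∀ x y : V, s(x, y) ∈ RemS ↔ isRem x y := by
      intro x y
      simp only [hRemS, Set.mem_image, Set.mem_Iio, hisRem]
      constructor
      · rintro ⟨j, hj, he⟩
        rcases Sym2.eq_iff.mp he.symm with ⟨h1, h2⟩ | ⟨h1, h2⟩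
        · exact ⟨j, hj, Or.inl ⟨h1, h2⟩⟩
        · exact ⟨j, hj, Or.inr ⟨h1, h2⟩⟩
      · rintro ⟨j, hj, (⟨rfl, rfl⟩ | ⟨rfl, rfl⟩)⟩
        · exact ⟨j, hj, rfl⟩
        · exact ⟨j, hj, Sym2.eq_swap⟩
    have hAddIff : ∀ x y : V, s(x, y) ∈ AddS ↔ isAdd x y := by
      intro x y
      simp only [hAddS, Set.mem_image, Set.mem_Iio, hisAdd]
      constructor
      · rintro ⟨j, hj, he⟩
        rcases Sym2.eq_iff.mp he.symm with ⟨h1, h2⟩ | ⟨h1, h2⟩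
        · exact ⟨j, hj, Or.inl ⟨h1, h2⟩⟩
        · exact ⟨j, hj, Or.inr ⟨h1, h2⟩⟩
      · rintro ⟨j, hj, (⟨rfl, rfl⟩ | ⟨rfl, rfl⟩)⟩
        · exact ⟨j, hj, rfl⟩
        · exact ⟨j, hj, Sym2.eq_swap⟩
    have hes : (mkSub G R hsymm hle).edgeSet = (N.edgeSet \ RemS) ∪ AddS := by
      ext e
      refine Sym2.ind (fun x y => ?_) e
      simp only [Subgraph.mem_edgeSet, mkSub_adj, Set.mem_union, Set.mem_diff,
        Subgraph.mem_edgeSet, hRdef, hRemIff, hAddIff]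
    have hRemSub : RemS ⊆ N.edgeSet := by
      rintro e ⟨j, hj, rfl⟩
      rw [Set.mem_Iio] at hj
      exact Subgraph.mem_edgeSet.mpr (halt1 (2*j) (by omega) (by simp))
    have hAddDisj : Disjoint (N.edgeSet \ RemS) AddS := by
      rw [Set.disjoint_right]
      rintro e ⟨j, hj, rfl⟩ ⟨hmem, -⟩
      rw [Set.mem_Iio] at hj
      exact (halt2 (2*j+1) (by omega) (by simp [Nat.even_add_one, parity_simps])).2
        (Subgraph.mem_edgeSet.mp hmem)
    have hRemCard : RemS.ncard = k := by
      rw [hRemS, Set.ncard_image_of_injOn, ← Finset.coe_range]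
      · rw [Set.ncard_coe_finset, Finset.card_range]
      · intro a ha b hb he
        simp only [Set.mem_Iio] at ha hb
        rcases Sym2.eq_iff.mp he with ⟨h1, -⟩ | ⟨h1, -⟩
        · have := hinj (2*a) (by omega) (2*b) (by omega) h1; omega
        · have := hinj (2*a) (by omega) (2*b+1) (by omega) h1; omega
    have hAddCard : AddS.ncard = k := by
      rw [hAddS, Set.ncard_image_of_injOn, ← Finset.coe_range]
      · rw [Set.ncard_coe_finset, Finset.card_range]
      · intro a ha b hb he
        simp only [Set.mem_Iio] at ha hb
        rcases Sym2.eq_iff.mp he with ⟨h1, -⟩ | ⟨h1, -⟩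
        · have := hinj (2*a+1) (by omega) (2*b+1) (by omega) h1; omega
        · have := hinj (2*a+1) (by omega) (2*b+2) (by omega) h1; omega
    have hkle : k ≤ N.edgeSet.ncard := by
      rw [← hRemCard]
      exact Set.ncard_le_ncard hRemSub (Set.toFinite _)
    rw [hes, Set.ncard_union_eq hAddDisj (Set.toFinite _) (Set.toFinite _),
      Set.ncard_diff hRemSub (Set.toFinite _), hRemCard, hAddCard]
    omega
  · rw [mkSub_verts]
    rintro ⟨y, (⟨h, h2⟩ | ⟨j, hj, (⟨hx, -⟩ | ⟨hx, -⟩)⟩)⟩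
    · exact h2 (hkey _ y 0 h (by omega) rfl)
    · have := hinj 0 (by omega) (2*j+1) (by omega) hx; omega
    · have := hinj 0 (by omega) (2*j+2) (by omega) hx; omega
  · intro x y h hoff
    refine Or.inl ⟨h, ?_⟩
    rintro ⟨j, hj, (⟨hx, -⟩ | ⟨hx, -⟩)⟩
    · exact hoff (2*j) (by omega) hx
    · exact hoff (2*j+1) (by omega) hx
  · rintro x ⟨y, (⟨h, -⟩ | ⟨j, hj, (⟨hx, -⟩ | ⟨hx, -⟩)⟩)⟩
    · exact Or.inl (N.edge_vert h)
    · exact Or.inr ⟨2*j+1, by omega, hx⟩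
    · exact Or.inr ⟨2*j+2, by omega, hx⟩

end Flip

section Path
variable [Fintype V] {M M₀ : G.Subgraph} {u : V}

lemma chain_inj' (hM : M.IsMatching) (hM₀ : M₀.IsMatching) (hu0 : u ∉ M₀.verts)
    {n : ℕ} (hg : GoodP M M₀ u n) :
    ∀ i, i ≤ n → ∀ j, j ≤ n → ch M M₀ u i = ch M M₀ u j → i = j := by
  intro i hi j hj he
  by_contra hne
  rcases Nat.lt_or_ge i j with h | h
  · exact chain_inj hM hM₀ hu0 hg j hj i h he
  · exact chain_inj hM hM₀ hu0 hg i hi j (by omega) he.symm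

lemma odd_saturated (hM : M.IsMatching) (hM₀ : M₀.IsMatching)
    (hM₀max : ∀ M' : G.Subgraph, M'.IsMatching → M'.edgeSet.ncard ≤ M₀.edgeSet.ncard)
    (hu0 : u ∉ M₀.verts)
    {n : ℕ} (hg : GoodP M M₀ u n) (hn : ¬ Even n) : ch M M₀ u n ∈ M₀.verts := by
  by_contra hend
  obtain ⟨t, ht⟩ : ∃ t, n = 2*t + 1 := (Nat.not_even_iff_odd.mp hn)
  have hinj' := chain_inj' hM hM₀ hu0 hg
  obtain ⟨N', hN', hcard, hc0, -, hverts⟩ :=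
    flip_exists (k := t) (c := fun m => ch M M₀ u (m+1)) hM₀
      (fun i hi j hj he => by
        have := hinj' (i+1) (by omega) (j+1) (by omega) he
        omega)
      (fun m hm hmE => ((hg (m+1) (by omega)).2 (by simp [Nat.even_add_one, hmE])).1)
      (fun m hm hmO => by
        have h := (hg (m+1) (by omega)).1 (by simpa [Nat.even_add_one] using hmO)
        exact ⟨h.1.adj_sub, h.2⟩)
      (by simpa [show 2*t+1 = n by omega] using hend)
  have hu' : u ∉ N'.verts := by
    intro hmem
    rcases hverts u hmem with h | ⟨m, hm, he⟩
    · exact hu0 h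
    · exact absurd (hinj' 0 (by omega) (m+1) (by omega) he) (by omega)
  have hadj : G.Adj u (ch M M₀ u 1) :=
    (((hg 0 (by omega)).1 (by simp)).1 : M.Adj (ch M M₀ u 0) (ch M M₀ u 1)).adj_sub
  obtain ⟨N'', hN'', hcard'⟩ := extend_card hN' hu' hc0 hadj
  have := hM₀max N'' hN''
  omega

lemma exists_path (hM : M.IsMatching) (hM₀ : M₀.IsMatching)
    (hM₀max : ∀ M' : G.Subgraph, M'.IsMatching → M'.edgeSet.ncard ≤ M₀.edgeSet.ncard)
    (hu : u ∈ M.verts) (hu0 : u ∉ M₀.verts) :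
    ∃ k, 1 ≤ k ∧ GoodP M M₀ u (2*k) ∧ ch M M₀ u (2*k) ∉ M.verts := by
  classical
  set A : ℕ → Prop := fun k => GoodP M M₀ u (2*k) ∧ ch M M₀ u (2*k) ∈ M.verts with hA
  have hstep : ∀ k, A k → GoodP M M₀ u (2*(k+1)) := by
    rintro k ⟨hg, hsat⟩
    have g1 : GoodP M M₀ u (2*k+1) := good_succ_even hM hM₀ hu0 hg (by simp) hsat
    have hodd : ch M M₀ u (2*k+1) ∈ M₀.verts :=
      odd_saturated hM hM₀ hM₀max hu0 g1 (by simp [Nat.even_add_one, parity_simps])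
    have g2 : GoodP M M₀ u (2*k+2) :=
      good_succ_odd hM hM₀ hu0 g1 (by simp [Nat.even_add_one, parity_simps]) hodd
    simpa [show 2*(k+1) = 2*k+2 by ring] using g2
  have hA0 : A 0 := ⟨fun m hm => absurd hm (by omega), hu⟩
  have hex : ∃ k, ¬ A k := by
    by_contra hall
    push_neg at hall
    set n := Fintype.card V with hn
    have hg : GoodP M M₀ u (2*(n+1)) := hstep n (hall n)
    have : Function.Injective (fun i : Fin (n+1) => ch M M₀ u (i : ℕ)) := by
      intro i j he
      have := chain_inj' hM hM₀ hu0 hg (i : ℕ) (by omega) (j : ℕ) (by omega) he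
      exact Fin.ext this
    have := Fintype.card_le_of_injective _ this
    simp [hn] at this
  have hnA : ¬ A (Nat.find hex) := Nat.find_spec hex
  have hk₀pos : 1 ≤ Nat.find hex := by
    rcases Nat.eq_zero_or_pos (Nat.find hex) with h | h
    · exact absurd (h ▸ hA0) hnA
    · exact h
  have hprev : A (Nat.find hex - 1) := by
    have h2 := Nat.find_min hex (m := Nat.find hex - 1) (by omega)
    exact not_not.mp h2
  have hgood : GoodP M M₀ u (2*(Nat.find hex)) := by
    have := hstep (Nat.find hex - 1) hprev
    simpa [show Nat.find hex - 1 + 1 = Nat.find hex by omega] using this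
  exact ⟨Nat.find hex, hk₀pos, hgood, fun hsat => hnA ⟨hgood, hsat⟩⟩

lemma chain_flip (hM : M.IsMatching) (hM₀ : M₀.IsMatching) (hu0 : u ∉ M₀.verts)
    {k : ℕ} (hg : GoodP M M₀ u (2*k)) (hend : ch M M₀ u (2*k) ∉ M.verts)
    {i : ℕ} (hi : i ≤ k) :
    ∃ N' : G.Subgraph, N'.IsMatching ∧ N'.edgeSet.ncard = M.edgeSet.ncard ∧
      ch M M₀ u (2*i) ∉ N'.verts ∧
      (∀ x y, M.Adj x y → (∀ m, m ≤ 2*k → x ≠ ch M M₀ u m) → N'.Adj x y) ∧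
      (∀ x, x ∈ N'.verts → x ∈ M.verts ∨ ∃ m, m ≤ 2*k ∧ x = ch M M₀ u m) := by
  have hinj' := chain_inj' hM hM₀ hu0 hg
  obtain ⟨N', hN', hcard, hc0, hkeep, hverts⟩ :=
    flip_exists (k := k - i) (c := fun m => ch M M₀ u (2*i + m)) hM
      (fun a ha b hb he => by
        have := hinj' (2*i+a) (by omega) (2*i+b) (by omega) he
        omega)
      (fun m hm hmE => ((hg (2*i+m) (by omega)).1 (by
        rcases hmE with ⟨r, hr⟩; exact ⟨i + r, by omega⟩)).1)
      (fun m hm hmO => by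
        have h := (hg (2*i+m) (by omega)).2 (by
          intro ⟨r, hr⟩
          exact hmO ⟨r - i, by omega⟩)
        exact ⟨h.1.adj_sub, h.2⟩)
      (by simpa [show 2*i + 2*(k-i) = 2*k by omega] using hend)
  refine ⟨N', hN', hcard, by simpa using hc0, ?_, ?_⟩
  · intro x y hxy hoff
    exact hkeep x y hxy (fun m hm => hoff (2*i+m) (by omega))
  · intro x hx
    rcases hverts x hx with h | ⟨m, hm, he⟩
    · exact Or.inl h
    · exact Or.inr ⟨2*i+m, by omega, he⟩

lemma chain_M_edge (hM : M.IsMatching) (hM₀ : M₀.IsMatching) (hu0 : u ∉ M₀.verts)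
    {k : ℕ} (hg : GoodP M M₀ u (2*k)) (hend : ch M M₀ u (2*k) ∉ M.verts)
    {x y : V} (hxy : M.Adj x y) {m : ℕ} (hm : m ≤ 2*k) (hxm : x = ch M M₀ u m) :
    ∃ j, j < k ∧ ((x = ch M M₀ u (2*j) ∧ y = ch M M₀ u (2*j+1)) ∨
      (x = ch M M₀ u (2*j+1) ∧ y = ch M M₀ u (2*j))) :=
  path_N_edge hM (fun m' hm' hmE => ((hg m' hm').1 hmE).1) hend hxy hm hxm

end Path

section Main
variable [Fintype V]

/-- Two exposable vertices (each missed by some maximum matching) are never adjacent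
in a bipartite graph. -/
lemma E_indep (hbip : G.Colorable 2) {a b : V}
    (ha : ∃ M : G.Subgraph, (M.IsMatching ∧
      ∀ M' : G.Subgraph, M'.IsMatching → M'.edgeSet.ncard ≤ M.edgeSet.ncard) ∧ a ∉ M.verts)
    (hb : ∃ M : G.Subgraph, (M.IsMatching ∧
      ∀ M' : G.Subgraph, M'.IsMatching → M'.edgeSet.ncard ≤ M.edgeSet.ncard) ∧ b ∉ M.verts)
    (hadj : G.Adj a b) : False := by
  obtain ⟨M, ⟨hM, hMmax⟩, haM⟩ := ha
  by_cases hbM : b ∈ M.verts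
  · obtain ⟨M₀, ⟨hM₀, hM₀max⟩, hbM₀⟩ := hb
    obtain ⟨k, hk1, hg, hend⟩ := exists_path hM hM₀ hM₀max hbM hbM₀
    by_cases hpath : ∃ m, m ≤ 2*k ∧ a = ch M M₀ b m
    · obtain ⟨m, hm, ham⟩ := hpath
      have hsat : ∀ m', m' < 2*k → ch M M₀ b m' ∈ M.verts := by
        intro m' hm'
        by_cases hmE : Even m'
        · exact M.edge_vert ((hg m' hm').1 hmE).1
        · obtain ⟨mm, rfl⟩ := Nat.exists_eq_succ_of_ne_zero
            (show m' ≠ 0 by rintro rfl; exact hmE (by simp))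
          have hmm : Even mm := by simpa [Nat.even_add_one] using hmE
          exact M.edge_vert (((hg mm (by omega)).1 hmm).1).symm
      have hm2k : m = 2*k := by
        by_contra hne
        exact haM (ham ▸ hsat m (by omega))
      obtain ⟨C⟩ := hbip
      have hwalk : ∀ m', m' < 2*k → G.Adj (ch M M₀ b m') (ch M M₀ b (m'+1)) := by
        intro m' hm'
        by_cases hmE : Even m'
        · exact ((hg m' hm').1 hmE).1.adj_sub
        · exact ((hg m' hm').2 hmE).1.adj_sub
      have hf2 : ∀ x y z : Fin 2, x ≠ y → z ≠ y → x = z := by decide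
      have hcol : ∀ i, i ≤ k → C (ch M M₀ b (2*i)) = C (ch M M₀ b 0) := by
        intro i
        induction i with
        | zero => intro _; rfl
        | succ i IH =>
          intro hik
          have h1 := C.valid (hwalk (2*i) (by omega))
          have h2 := C.valid (hwalk (2*i+1) (by omega))
          have : C (ch M M₀ b (2*i+2)) = C (ch M M₀ b (2*i)) :=
            hf2 _ _ _ (Ne.symm h2) h1
          rw [show 2*(i+1) = 2*i+2 by ring, this]
          exact IH (by omega)
      have hCa : C a = C b := by
        rw [ham, hm2k]
        exact hcol k le_rfl
      exact C.valid hadj hCa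
    · push_neg at hpath
      obtain ⟨N', hN', hcard, hc0, hkeep, hverts⟩ :=
        chain_flip hM hM₀ hbM₀ hg hend (i := 0) (by omega)
      have haN' : a ∉ N'.verts := by
        intro h
        rcases hverts a h with h' | ⟨m, hm, he⟩
        · exact haM h'
        · exact hpath m hm he
      have hbN' : b ∉ N'.verts := hc0
      obtain ⟨N'', hN'', hcard'⟩ := extend_card hN' haN' hbN' hadj
      have := hMmax N'' hN''
      omega
  · obtain ⟨N, hN, hcard⟩ := extend_card hM haM hbM hadj
    have := hMmax N hN
    omega

/-- If `v` is adjacent to an exposable vertex `a` and `v`–`w` is an edge of a maximum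
matching, then some maximum-size matching misses `w` (or misses `v`). -/
lemma O_partner {a v w : V}
    (haE : ∃ M₀ : G.Subgraph, (M₀.IsMatching ∧
      ∀ M' : G.Subgraph, M'.IsMatching → M'.edgeSet.ncard ≤ M₀.edgeSet.ncard) ∧ a ∉ M₀.verts)
    (hav : G.Adj a v) {M : G.Subgraph} (hM : M.IsMatching)
    (hMmax : ∀ M' : G.Subgraph, M'.IsMatching → M'.edgeSet.ncard ≤ M.edgeSet.ncard)
    (hvw : M.Adj v w) :
    (∃ N : G.Subgraph, (N.IsMatching ∧
      ∀ M' : G.Subgraph, M'.IsMatching → M'.edgeSet.ncard ≤ N.edgeSet.ncard) ∧ w ∉ N.verts) ∨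
    (∃ N : G.Subgraph, (N.IsMatching ∧
      ∀ M' : G.Subgraph, M'.IsMatching → M'.edgeSet.ncard ≤ N.edgeSet.ncard) ∧ v ∉ N.verts) := by
  have hmax_tr : ∀ N : G.Subgraph, N.IsMatching → N.edgeSet.ncard = M.edgeSet.ncard →
      ∀ M' : G.Subgraph, M'.IsMatching → M'.edgeSet.ncard ≤ N.edgeSet.ncard := by
    intro N hN hcard M' hM'
    rw [hcard]
    exact hMmax M' hM'
  by_cases haM : a ∈ M.verts
  · obtain ⟨M₀, ⟨hM₀, hM₀max⟩, haM₀⟩ := haE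
    obtain ⟨k, hk1, hg, hend⟩ := exists_path hM hM₀ hM₀max haM haM₀
    by_cases hpathv : ∃ m, m ≤ 2*k ∧ v = ch M M₀ a m
    · obtain ⟨m, hm, hvm⟩ := hpathv
      obtain ⟨j, hj, hcase⟩ := chain_M_edge hM hM₀ haM₀ hg hend hvw hm hvm
      rcases hcase with ⟨hv, hw⟩ | ⟨hv, hw⟩
      · obtain ⟨N', hN', hcard, hmiss, -, -⟩ :=
          chain_flip hM hM₀ haM₀ hg hend (i := j) (le_of_lt hj)
        exact Or.inr ⟨N', ⟨hN', hmax_tr N' hN' hcard⟩, by rw [hv]; exact hmiss⟩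
      · obtain ⟨N', hN', hcard, hmiss, -, -⟩ :=
          chain_flip hM hM₀ haM₀ hg hend (i := j) (le_of_lt hj)
        exact Or.inl ⟨N', ⟨hN', hmax_tr N' hN' hcard⟩, by rw [hw]; exact hmiss⟩
    · by_cases hpathw : ∃ m, m ≤ 2*k ∧ w = ch M M₀ a m
      · obtain ⟨m, hm, hwm⟩ := hpathw
        obtain ⟨j, hj, hcase⟩ := chain_M_edge hM hM₀ haM₀ hg hend hvw.symm hm hwm
        rcases hcase with ⟨hw, hv⟩ | ⟨hw, hv⟩
        · obtain ⟨N', hN', hcard, hmiss, -, -⟩ :=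
            chain_flip hM hM₀ haM₀ hg hend (i := j) (le_of_lt hj)
          exact Or.inl ⟨N', ⟨hN', hmax_tr N' hN' hcard⟩, by rw [hw]; exact hmiss⟩
        · push_neg at hpathv
          exact absurd hv (hpathv (2*j) (by omega))
      · push_neg at hpathv
        obtain ⟨N', hN', hcard, hmiss, hkeep, hverts⟩ :=
          chain_flip hM hM₀ haM₀ hg hend (i := 0) (by omega)
        have haN' : a ∉ N'.verts := hmiss
        have hN'vw : N'.Adj v w := hkeep v w hvw (fun m hm => hpathv m hm)
        obtain ⟨N₂, hN₂, hcard₂, hwN₂⟩ := swap_card hN' hN'vw haN' hav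
        exact Or.inl ⟨N₂, ⟨hN₂, hmax_tr N₂ hN₂ (hcard₂.trans hcard)⟩, hwN₂⟩
  · obtain ⟨N₂, hN₂, hcard₂, hwN₂⟩ := swap_card hM hvw haM hav
    exact Or.inl ⟨N₂, ⟨hN₂, hmax_tr N₂ hN₂ hcard₂⟩, hwN₂⟩

end Main

end DMAux

/-- `M` is a maximum-cardinality matching of `G`: it is a matching (every vertex of
the subgraph `M` is incident to exactly one edge of `M`) and no matching has more
edges. -/
def IsMaximumMatching {V : Type*} [Fintype V] {G : SimpleGraph V} (M : G.Subgraph) : Prop :=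
  M.IsMatching ∧ ∀ M' : G.Subgraph, M'.IsMatching → M'.edgeSet.ncard ≤ M.edgeSet.ncard

section DMSets
variable {V : Type*} [Fintype V] (G : SimpleGraph V)

/-- Vertices missed by some maximum matching. -/
def ESet : Set V := {v | ∃ M : G.Subgraph, (M.IsMatching ∧
  ∀ M' : G.Subgraph, M'.IsMatching → M'.edgeSet.ncard ≤ M.edgeSet.ncard) ∧ v ∉ M.verts}

/-- Vertices outside `ESet` adjacent to `ESet`. -/
def OSet : Set V := {v | v ∉ ESet G ∧ ∃ w, w ∈ ESet G ∧ G.Adj v w}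

/-- The remaining vertices. -/
def USet : Set V := {v | v ∉ ESet G ∧ v ∉ OSet G}

end DMSets

/-- Dulmage–Mendelsohn decomposition: every finite bipartite graph `G` admits a
partition of its vertices into `O`, `E`, `U` such that (i) every maximum matching
uses only `U`–`U` and `E`–`O` edges, (ii) every maximum matching saturates all of
`U ∪ O`, (iii) twice the size of a maximum matching is `2|O| + |U|`, and
(iv) there are no `E`–`E` edges and no `E`–`U` edges in `G`. -/
theorem dulmage_mendelsohn {V : Type*} [Fintype V] (G : SimpleGraph V)
    (hbip : G.Colorable 2) :
    ∃ O E U : Set V,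
      (O ∪ E ∪ U = Set.univ) ∧ Disjoint O E ∧ Disjoint O U ∧ Disjoint E U ∧
      (∀ M : G.Subgraph, IsMaximumMatching M → ∀ v w, M.Adj v w →
        (v ∈ U ∧ w ∈ U) ∨ (v ∈ E ∧ w ∈ O) ∨ (v ∈ O ∧ w ∈ E)) ∧
      (∀ M : G.Subgraph, IsMaximumMatching M → U ∪ O ⊆ M.verts) ∧
      (∀ M : G.Subgraph, IsMaximumMatching M →
        2 * M.edgeSet.ncard = 2 * O.ncard + U.ncard) ∧
      (∀ v ∈ E, ∀ w, (w ∈ E → ¬ G.Adj v w) ∧ (w ∈ U → ¬ G.Adj v w)) := by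
  classical
  have hMMiff : ∀ M : G.Subgraph, IsMaximumMatching M ↔ (M.IsMatching ∧
      ∀ M' : G.Subgraph, M'.IsMatching → M'.edgeSet.ncard ≤ M.edgeSet.ncard) :=
    fun _ => Iff.rfl
  have hind : ∀ a b, a ∈ ESet G → b ∈ ESet G → ¬ G.Adj a b :=
    fun a b ha hb hadj => E_indep hbip ha hb hadj
  have hsat : ∀ (M : G.Subgraph), IsMaximumMatching M → ∀ x, x ∉ ESet G → x ∈ M.verts :=
    fun M hMM x hx => by
      by_contra h
      exact hx ⟨M, (hMMiff M).mp hMM, h⟩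
  have hclass : ∀ M : G.Subgraph, IsMaximumMatching M → ∀ v w, M.Adj v w →
      (v ∈ USet G ∧ w ∈ USet G) ∨ (v ∈ ESet G ∧ w ∈ OSet G) ∨
      (v ∈ OSet G ∧ w ∈ ESet G) := by
    intro M hMM v w hadj
    obtain ⟨hM, hmax⟩ := (hMMiff M).mp hMM
    have hG := hadj.adj_sub
    by_cases hvE : v ∈ ESet G
    · have hwE : w ∉ ESet G := fun hw => hind v w hvE hw hG
      exact Or.inr (Or.inl ⟨hvE, ⟨hwE, v, hvE, hG.symm⟩⟩)
    by_cases hwE : w ∈ ESet G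
    · exact Or.inr (Or.inr ⟨⟨hvE, w, hwE, hG⟩, hwE⟩)
    by_cases hvO : v ∈ OSet G
    · obtain ⟨-, aa, haE, hva⟩ := hvO
      rcases O_partner haE hva.symm hM hmax hadj with ⟨N, hp, hwN⟩ | ⟨N, hp, hvN⟩
      · exact absurd ⟨N, hp, hwN⟩ hwE
      · exact absurd ⟨N, hp, hvN⟩ hvE
    by_cases hwO : w ∈ OSet G
    · obtain ⟨-, aa, haE, hwa⟩ := hwO
      rcases O_partner haE hwa.symm hM hmax hadj.symm with ⟨N, hp, hvN⟩ | ⟨N, hp, hwN⟩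
      · exact absurd ⟨N, hp, hvN⟩ hvE
      · exact absurd ⟨N, hp, hwN⟩ hwE
    · exact Or.inl ⟨⟨hvE, hvO⟩, ⟨hwE, hwO⟩⟩
  refine ⟨OSet G, ESet G, USet G, ?_, ?_, ?_, ?_, hclass, ?_, ?_, ?_⟩
  · ext v
    simp only [Set.mem_union, Set.mem_univ, iff_true]
    by_cases hE : v ∈ ESet G
    · exact Or.inl (Or.inr hE)
    by_cases hO : v ∈ OSet G
    · exact Or.inl (Or.inl hO)
    · exact Or.inr ⟨hE, hO⟩
  · exact Set.disjoint_left.mpr (fun v hvO hvE => hvO.1 hvE)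
  · exact Set.disjoint_left.mpr (fun v hvO hvU => hvU.2 hvO)
  · exact Set.disjoint_left.mpr (fun v hvE hvU => hvU.1 hvE)
  · intro M hMM x hx
    rcases hx with h' | h'
    · exact hsat M hMM x h'.1
    · exact hsat M hMM x h'.1
  · intro M hMM
    obtain ⟨hM, hmax⟩ := (hMMiff M).mp hMM
    have himg : ESet G ∩ M.verts = (fun x => pw M x) '' (OSet G) := by
      ext x
      constructor
      · rintro ⟨hxE, hxV⟩
        have hadjx := pw_adj hM hxV
        rcases hclass M hMM x _ hadjx with ⟨⟨h1, -⟩, -⟩ | ⟨-, hpO⟩ | ⟨⟨h1, -⟩, -⟩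
        · exact absurd hxE h1
        · have hpV : pw M x ∈ M.verts := M.edge_vert hadjx.symm
          have : pw M (pw M x) = x :=
            matching_partner_unique hM (pw_adj hM hpV) hadjx.symm
          exact ⟨pw M x, hpO, this⟩
        · exact absurd hxE h1
      · rintro ⟨o, hoO, rfl⟩
        have hoV : o ∈ M.verts := hsat M hMM o hoO.1
        have hadjo := pw_adj hM hoV
        rcases hclass M hMM o _ hadjo with ⟨⟨-, h1⟩, -⟩ | ⟨h1, -⟩ | ⟨-, hpE⟩
        · exact absurd hoO h1
        · exact absurd h1 hoO.1
        · exact ⟨hpE, M.edge_vert hadjo.symm⟩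
    have hinjO : Set.InjOn (fun x => pw M x) (OSet G) := by
      intro x hx y hy he
      have hax := (pw_adj hM (hsat M hMM x hx.1)).symm
      have hay := (pw_adj hM (hsat M hMM y hy.1)).symm
      have he' : pw M x = pw M y := he
      rw [← he'] at hay
      exact matching_partner_unique hM hax hay
    have hcardEO : (ESet G ∩ M.verts).ncard = (OSet G).ncard := by
      rw [himg, Set.ncard_image_of_injOn hinjO]
    have hdecomp : M.verts = (OSet G ∪ USet G) ∪ (ESet G ∩ M.verts) := by
      ext x
      constructor
      · intro hx
        by_cases hxE : x ∈ ESet G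
        · exact Or.inr ⟨hxE, hx⟩
        by_cases hxO : x ∈ OSet G
        · exact Or.inl (Or.inl hxO)
        · exact Or.inl (Or.inr ⟨hxE, hxO⟩)
      · rintro ((h | h) | h)
        · exact hsat M hMM x h.1
        · exact hsat M hMM x h.1
        · exact h.2
    have hdisj1 : Disjoint (OSet G ∪ USet G) (ESet G ∩ M.verts) := by
      rw [Set.disjoint_left]
      rintro x (h | h) ⟨hxE, -⟩
      · exact h.1 hxE
      · exact h.1 hxE
    have hdisj2 : Disjoint (OSet G) (USet G) :=
      Set.disjoint_left.mpr (fun x hxO hxU => hxU.2 hxO)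
    have hhs : 2 * M.edgeSet.ncard = M.verts.ncard := two_mul_ncard_edgeSet hM
    have hv1 : M.verts.ncard = (OSet G ∪ USet G).ncard + (ESet G ∩ M.verts).ncard := by
      conv_lhs => rw [hdecomp]
      exact Set.ncard_union_eq hdisj1 (Set.toFinite _) (Set.toFinite _)
    have hv2 : (OSet G ∪ USet G).ncard = (OSet G).ncard + (USet G).ncard :=
      Set.ncard_union_eq hdisj2 (Set.toFinite _) (Set.toFinite _)
    omega
  · intro v hv w
    refine ⟨fun hw hadj => hind v w hv hw hadj, fun hwU hadj => ?_⟩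
    exact hwU.2 ⟨hwU.1, v, hv, hadj.symm⟩
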